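/- Let (X,T) be a TDS such that the product system (X × X, T × T) is mean proximal. Then every (T×T)-invariant Borel probability measure λ on X × X satisfies λ(Δ_X) = 1, where Δ_X is the diagonal. -/

import Mathlib

open Filter Metric Set MeasureTheory

/-- Birkhoff average of the distance between the orbits of `x` and `y`. -/
noncomputable def birkhoffAvg {X : Type*} [PseudoMetricSpace X]
    (T : X → X) (x y : X) (N : ℕ) : ℝ :=
  (∑ k ∈ Finset.range N, dist (T^[k] x) (T^[k] y)) / N

/-- A pair `(x,y)` is mean proximal if
`liminf_{N→∞} (1/N) ∑_{k<N} d(T^k x, T^k y) = 0`. -/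
def MeanProximalPair {X : Type*} [PseudoMetricSpace X] (T : X → X) (x y : X) : Prop :=
  liminf (birkhoffAvg T x y) atTop = 0


lemma sum_block_bound {Y : Type*} (S : Y → Y) (g h : Y → ℝ) (ε C : ℝ) (N : ℕ)
    (hgC : ∀ p, g p ≤ C) (hC : 0 ≤ C) (hε : 0 ≤ ε)
    (hh0 : ∀ p, 0 ≤ h p)
    (hkey : ∀ p, ∃ n, 1 ≤ n ∧ n ≤ N ∧
      ∑ k ∈ Finset.range n, g (S^[k] p) ≤ ε * n + ∑ k ∈ Finset.range n, h (S^[k] p)) :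
    ∀ M p, ∑ k ∈ Finset.range M, g (S^[k] p)
      ≤ ε * M + (∑ k ∈ Finset.range M, h (S^[k] p)) + N * C := by
  intro M
  induction M using Nat.strong_induction_on with
  | _ M IH =>
    intro p
    by_cases hMN : M ≤ N
    · have h1 : ∑ k ∈ Finset.range M, g (S^[k] p) ≤ ∑ k ∈ Finset.range M, C :=
        Finset.sum_le_sum fun k _ => hgC _
      have h2 : (0:ℝ) ≤ ∑ k ∈ Finset.range M, h (S^[k] p) :=
        Finset.sum_nonneg fun k _ => hh0 _
      have h3 : (M:ℝ) * C ≤ N * C := by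
        apply mul_le_mul_of_nonneg_right _ hC
        exact_mod_cast hMN
      simp only [Finset.sum_const, Finset.card_range, nsmul_eq_mul] at h1
      have : (0:ℝ) ≤ ε * M := mul_nonneg hε (by positivity)
      linarith
    · push_neg at hMN
      obtain ⟨n, hn1, hnN, hblock⟩ := hkey p
      have hnM : n ≤ M := le_trans hnN hMN.le
      have esplit : ∀ f : Y → ℝ, ∑ k ∈ Finset.range M, f (S^[k] p)
          = (∑ k ∈ Finset.range n, f (S^[k] p))
            + ∑ k ∈ Finset.range (M - n), f (S^[k] (S^[n] p)) := by
        intro f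
        have hsra := Finset.sum_range_add (fun k => f (S^[k] p)) n (M - n)
        rw [show n + (M - n) = M by omega] at hsra
        rw [hsra]
        congr 1
        refine Finset.sum_congr rfl fun k _ => ?_
        rw [← Function.iterate_add_apply, Nat.add_comm k n]
      have hIH := IH (M - n) (by omega) (S^[n] p)
      have hcast : ((M - n : ℕ) : ℝ) = (M : ℝ) - n := by
        rw [Nat.cast_sub hnM]
      rw [esplit g, esplit h]
      rw [hcast] at hIH
      have : ε * M = ε * n + ε * ((M:ℝ) - n) := by ring
      linarith

theorem diagonal_full_of_product_meanProximal'
    {X : Type*} [MetricSpace X] [CompactSpace X] [MeasurableSpace X] [BorelSpace X]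
    (T : X → X) (hT : Continuous T)
    (hmp : ∀ u v : X × X, liminf (fun N : ℕ =>
      (∑ k ∈ Finset.range N, dist ((Prod.map T T)^[k] u) ((Prod.map T T)^[k] v)) / N) atTop = 0)
    (ν : Measure (X × X)) [IsProbabilityMeasure ν]
    (hinv : ∀ B : Set (X × X), MeasurableSet B → ν (Prod.map T T ⁻¹' B) = ν B) :
    ν (Set.diagonal X) = 1 := by
  classical
  set S : X × X → X × X := Prod.map T T with hS
  have hScont : Continuous S := hT.prodMap hT
  have hSm : Measurable S := hScont.measurable
  have hpres : MeasurePreserving S ν ν := by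
    refine ⟨hSm, Measure.ext fun B hB => ?_⟩
    rw [Measure.map_apply hSm hB]
    exact hinv B hB
  set g : X × X → ℝ := fun p => dist p.1 p.2 with hg
  have hgcont : Continuous g := continuous_fst.dist continuous_snd
  have hg0 : ∀ p, 0 ≤ g p := fun p => dist_nonneg
  -- nonempty
  rcases isEmpty_or_nonempty (X × X) with hne | hne
  · exfalso
    have h1 : ν univ = 1 := measure_univ
    rw [Set.univ_eq_empty_iff.mpr hne] at h1
    simp at h1
  -- bound C
  obtain ⟨p0, -, hp0⟩ := isCompact_univ.exists_isMaxOn (univ_nonempty) hgcont.continuousOn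
  set C : ℝ := max (g p0) 0 with hCdef
  have hC : 0 ≤ C := le_max_right _ _
  have hgC : ∀ p, g p ≤ C := fun p => le_trans (hp0 (mem_univ p)) (le_max_left _ _)
  -- orbit sums are continuous
  have hsumcont : ∀ n : ℕ, Continuous fun p => ∑ k ∈ Finset.range n, g (S^[k] p) := by
    intro n
    exact continuous_finset_sum _ fun k _ => hgcont.comp (hScont.iterate k)
  -- pointwise consequence of mean proximality
  have ptwise : ∀ p : X × X, ∀ ε : ℝ, 0 < ε →
      ∃ n, 1 ≤ n ∧ ∑ k ∈ Finset.range n, g (S^[k] p) < ε * n := by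
    intro p ε hε
    have hterm : ∀ k : ℕ, dist (S^[k] p) (S^[k] (p.1, p.1)) = g (S^[k] p) := by
      intro k
      have h1 : S^[k] = Prod.map (T^[k]) (T^[k]) := Prod.map_iterate T T k
      rw [h1]
      simp only [Prod.map, hg, Prod.dist_eq]
      simp [dist_comm]
    set a : ℕ → ℝ := fun N =>
      (∑ k ∈ Finset.range N, dist (S^[k] p) (S^[k] (p.1, p.1))) / N with ha
    have hlim : liminf a atTop = 0 := hmp p (p.1, p.1)
    have ha0 : ∀ N, 0 ≤ a N := fun N =>
      div_nonneg (Finset.sum_nonneg fun k _ => dist_nonneg) (Nat.cast_nonneg N)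
    have hbd : IsBoundedUnder (· ≤ ·) atTop a := by
      refine ⟨C, eventually_atTop.2 ⟨1, fun N hN => ?_⟩⟩
      have : ∑ k ∈ Finset.range N, dist (S^[k] p) (S^[k] (p.1, p.1))
          ≤ ∑ k ∈ Finset.range N, C := by
        refine Finset.sum_le_sum fun k _ => ?_
        rw [hterm k]; exact hgC _
      simp only [Finset.sum_const, Finset.card_range, nsmul_eq_mul] at this
      have hNpos : (0:ℝ) < N := by exact_mod_cast hN
      show (∑ k ∈ Finset.range N, dist (S^[k] p) (S^[k] (p.1, p.1))) / N ≤ C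
      rw [div_le_iff₀ hNpos]
      calc (∑ k ∈ Finset.range N, dist (S^[k] p) (S^[k] (p.1, p.1)))
          ≤ (N:ℝ) * C := by exact_mod_cast this
        _ = C * N := by ring
    have hcob : IsCoboundedUnder (· ≥ ·) atTop a := hbd.isCoboundedUnder_ge
    have hfreq : ∃ᶠ N in atTop, a N < ε := by
      apply frequently_lt_of_liminf_lt hcob
      rw [hlim]; exact hε
    obtain ⟨n, hn1, hna⟩ := (hfreq.and_eventually (eventually_ge_atTop 1)).exists
    refine ⟨n, hna, ?_⟩
    have hnpos : (0:ℝ) < n := by exact_mod_cast hna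
    have : a n < ε := hn1
    rw [ha, div_lt_iff₀ hnpos] at this
    calc ∑ k ∈ Finset.range n, g (S^[k] p)
        = ∑ k ∈ Finset.range n, dist (S^[k] p) (S^[k] (p.1, p.1)) := by
          exact Finset.sum_congr rfl fun k _ => (hterm k).symm
      _ < ε * n := this
  -- integrability of continuous functions
  have hintcont : ∀ f : X × X → ℝ, Continuous f → Integrable f ν := fun f hf =>
    hf.integrable_of_hasCompactSupport (HasCompactSupport.of_compactSpace f)
  -- invariance of integrals
  have hcomp_int : ∀ f : X × X → ℝ, Continuous f → ∀ k : ℕ,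
      ∫ p, f (S^[k] p) ∂ν = ∫ p, f p ∂ν := by
    intro f hf k
    calc ∫ p, f (S^[k] p) ∂ν
        = ∫ p, f p ∂(Measure.map S^[k] ν) :=
          (integral_map ((hScont.iterate k).measurable).aemeasurable
            hf.aestronglyMeasurable).symm
      _ = ∫ p, f p ∂ν := by rw [(hpres.iterate k).map_eq]
  set c : ℝ := ∫ p, g p ∂ν with hcdef
  -- the bad sets
  set F : ℝ → ℕ → Set (X × X) := fun ε N =>
    {p | ∀ n, 1 ≤ n → n ≤ N → ε * n ≤ ∑ k ∈ Finset.range n, g (S^[k] p)} with hFdef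
  have hFclosed : ∀ ε : ℝ, ∀ N : ℕ, IsClosed (F ε N) := by
    intro ε N
    have hrw : F ε N = ⋂ n ∈ Finset.Icc 1 N,
        {p | ε * n ≤ ∑ k ∈ Finset.range n, g (S^[k] p)} := by
      ext p
      simp only [hFdef, Set.mem_iInter, Set.mem_setOf_eq, Finset.mem_Icc, and_imp]
    rw [hrw]
    exact isClosed_biInter fun n _ => isClosed_le continuous_const (hsumcont n)
  have hFmeas : ∀ ε : ℝ, ∀ N : ℕ, MeasurableSet (F ε N) :=
    fun ε N => (hFclosed ε N).measurableSet
  -- main estimate for fixed ε, N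
  have main : ∀ ε : ℝ, 0 < ε → ∀ N : ℕ, 1 ≤ N →
      c ≤ ε + (ν (F ε N)).toReal * C := by
    intro ε hε N hN
    set h : X × X → ℝ := (F ε N).indicator (fun _ => C) with hhdef
    have hh0 : ∀ p, 0 ≤ h p := fun p => Set.indicator_nonneg (fun _ _ => hC) p
    have hkey : ∀ p, ∃ n, 1 ≤ n ∧ n ≤ N ∧
        ∑ k ∈ Finset.range n, g (S^[k] p) ≤ ε * n + ∑ k ∈ Finset.range n, h (S^[k] p) := by
      intro p
      by_cases hp : p ∈ F ε N
      · refine ⟨1, le_refl 1, hN, ?_⟩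
        simp only [Finset.sum_range_one, Function.iterate_zero_apply]
        have hhp : h p = C := by rw [hhdef]; simp [Set.indicator_of_mem hp]
        rw [hhp]
        have := hgC p
        push_cast
        linarith
      · rw [hFdef] at hp
        simp only [Set.mem_setOf_eq, not_forall, not_le] at hp
        obtain ⟨n, hn1, hnN, hlt⟩ := hp
        refine ⟨n, hn1, hnN, le_trans hlt.le ?_⟩
        have := Finset.sum_nonneg (fun k (_ : k ∈ Finset.range n) => hh0 (S^[k] p))
        linarith
    have hbound := sum_block_bound S g h ε C N hgC hC hε.le hh0 hkey
    -- integrability of h ∘ S^[k]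
    have hpre : ∀ k : ℕ, (fun p => h (S^[k] p))
        = ((S^[k]) ⁻¹' (F ε N)).indicator (fun _ => C) := by
      intro k; funext p
      by_cases hp : S^[k] p ∈ F ε N <;>
        simp [hhdef, Set.indicator, hp, Set.mem_preimage]
    have hpremeas : ∀ k : ℕ, MeasurableSet ((S^[k]) ⁻¹' (F ε N)) :=
      fun k => (hScont.iterate k).measurable (hFmeas ε N)
    have hint_hk : ∀ k : ℕ, Integrable (fun p => h (S^[k] p)) ν := by
      intro k
      rw [hpre k]
      exact (integrable_const C).indicator (hpremeas k)
    have hval_hk : ∀ k : ℕ, ∫ p, h (S^[k] p) ∂ν = (ν (F ε N)).toReal * C := by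
      intro k
      rw [hpre k, integral_indicator_const C (hpremeas k), measureReal_def,
        (hpres.iterate k).measure_preimage (hFmeas ε N).nullMeasurableSet, smul_eq_mul]
    have hint_gk : ∀ k : ℕ, Integrable (fun p => g (S^[k] p)) ν :=
      fun k => hintcont _ (hgcont.comp (hScont.iterate k))
    -- integrate the pointwise bound
    have hM : ∀ M : ℕ, (M : ℝ) * c ≤ ε * M + (M : ℝ) * ((ν (F ε N)).toReal * C) + N * C := by
      intro M
      have hintsum_g : Integrable (fun p => ∑ k ∈ Finset.range M, g (S^[k] p)) ν :=
        integrable_finset_sum _ fun k _ => hint_gk k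
      have hintsum_h : Integrable (fun p => ∑ k ∈ Finset.range M, h (S^[k] p)) ν :=
        integrable_finset_sum _ fun k _ => hint_hk k
      have hintR : Integrable
          (fun p => ε * M + ∑ k ∈ Finset.range M, h (S^[k] p) + (N:ℝ) * C) ν :=
        ((integrable_const (ε * (M:ℝ))).add hintsum_h).add (integrable_const ((N:ℝ) * C))
      have hle := integral_mono hintsum_g hintR (fun p => hbound M p)
      have hlhs : ∫ p, ∑ k ∈ Finset.range M, g (S^[k] p) ∂ν = (M : ℝ) * c := by
        rw [integral_finset_sum _ fun k _ => hint_gk k]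
        have : ∀ k ∈ Finset.range M, ∫ p, g (S^[k] p) ∂ν = c :=
          fun k _ => hcomp_int g hgcont k
        rw [Finset.sum_congr rfl this]
        simp [mul_comm]
      have e1 : ∫ p, (ε * (M:ℝ) + ∑ k ∈ Finset.range M, h (S^[k] p) + (N:ℝ) * C) ∂ν
          = (∫ p, (ε * (M:ℝ) + ∑ k ∈ Finset.range M, h (S^[k] p)) ∂ν)
            + ∫ _p : X × X, ((N:ℝ) * C) ∂ν :=
        integral_add ((integrable_const _).add hintsum_h) (integrable_const _)
      have e2 : ∫ p, (ε * (M:ℝ) + ∑ k ∈ Finset.range M, h (S^[k] p)) ∂ν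
          = (∫ _p : X × X, (ε * (M:ℝ)) ∂ν)
            + ∫ p, ∑ k ∈ Finset.range M, h (S^[k] p) ∂ν :=
        integral_add (integrable_const _) hintsum_h
      have e3 : ∫ p, ∑ k ∈ Finset.range M, h (S^[k] p) ∂ν
          = (M:ℝ) * ((ν (F ε N)).toReal * C) := by
        rw [integral_finset_sum _ fun k _ => hint_hk k,
          Finset.sum_congr rfl (fun k (_ : k ∈ Finset.range M) => hval_hk k)]
        simp [mul_comm]
      rw [hlhs, e1, e2, e3] at hle
      simp only [integral_const, measureReal_def, measure_univ, ENNReal.toReal_one, smul_eq_mul, one_mul] at hle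
      linarith
    -- let M → ∞
    have htend : Tendsto (fun M : ℕ => ((N:ℝ) * C) / M) atTop (nhds 0) :=
      tendsto_const_div_atTop_nhds_zero_nat _
    have hfin : c - ε - (ν (F ε N)).toReal * C ≤ 0 := by
      refine ge_of_tendsto htend ?_
      filter_upwards [eventually_ge_atTop 1] with M hM1
      have hMpos : (0 : ℝ) < M := by exact_mod_cast hM1
      rw [le_div_iff₀ hMpos]
      have := hM M
      nlinarith
    linarith
  -- let N → ∞
  have hcle : ∀ ε : ℝ, 0 < ε → c ≤ ε := by
    intro ε hε
    have hanti : Antitone (F ε) := by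
      intro N N' hNN' p hp n hn1 hnN
      exact hp n hn1 (le_trans hnN hNN')
    have hempty : ⋂ N, F ε N = ∅ := by
      ext p
      simp only [Set.mem_iInter, Set.mem_empty_iff_false, iff_false, not_forall]
      obtain ⟨n, hn1, hlt⟩ := ptwise p ε hε
      exact ⟨n, fun hp => absurd (hp n hn1 le_rfl) (not_le.mpr hlt)⟩
    have htend : Tendsto (fun N => ν (F ε N)) atTop (nhds 0) := by
      have h1 := tendsto_measure_iInter_atTop
        (fun N => (hFmeas ε N).nullMeasurableSet) hanti ⟨1, measure_ne_top ν _⟩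
      rw [hempty] at h1
      simpa [Function.comp_def] using h1
    have htendr : Tendsto (fun N => (ν (F ε N)).toReal * C) atTop (nhds 0) := by
      have h2 : Tendsto (fun N => (ν (F ε N)).toReal) atTop (nhds 0) := by
        have := (ENNReal.tendsto_toReal (by simp : (0:ENNReal) ≠ ⊤)).comp htend
        simpa [Function.comp_def] using this
      simpa using h2.mul_const C
    have : c - ε ≤ 0 := by
      refine ge_of_tendsto htendr ?_
      filter_upwards [eventually_ge_atTop 1] with N hN
      have := main ε hε N hN
      linarith
    linarith
  have hc0 : c = 0 := by
    have h1 : c ≤ 0 := by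
      by_contra hcon
      push_neg at hcon
      have := hcle (c / 2) (by linarith)
      linarith
    have h2 : 0 ≤ c := integral_nonneg hg0
    linarith
  -- conclude
  have hg_ae : ∀ᵐ p ∂ν, g p = 0 :=
    (integral_eq_zero_iff_of_nonneg hg0 (hintcont g hgcont)).mp hc0
  have hnull : ν {p : X × X | ¬ g p = 0} = 0 := by
    rw [← ae_iff.symm] at hg_ae
    exact ae_iff.mp hg_ae
  have hdiag : {p : X × X | ¬ g p = 0} = (Set.diagonal X)ᶜ := by
    ext p
    simp only [Set.mem_setOf_eq, Set.mem_compl_iff, Set.mem_diagonal_iff, hg]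
    rw [dist_eq_zero]
  rw [hdiag] at hnull
  have hm : MeasurableSet (Set.diagonal X) := isClosed_diagonal.measurableSet
  have hsum := measure_add_measure_compl (μ := ν) hm
  rw [hnull, add_zero, measure_univ] at hsum
  exact hsum

/-- If the product system `(X × X, T × T)` is mean proximal, then every
`(T×T)`-invariant Borel probability measure on `X × X` gives full measure to the
diagonal. -/
theorem diagonal_full_of_product_meanProximal
    {X : Type*} [MetricSpace X] [CompactSpace X] [MeasurableSpace X] [BorelSpace X]
    (T : X → X) (hT : Continuous T)
    (hmp : ∀ u v : X × X, MeanProximalPair (Prod.map T T) u v)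
    (ν : Measure (X × X)) [IsProbabilityMeasure ν]
    (hinv : ∀ B : Set (X × X), MeasurableSet B → ν (Prod.map T T ⁻¹' B) = ν B) :
    ν (Set.diagonal X) = 1 := by
  exact diagonal_full_of_product_meanProximal' T hT (fun u v => hmp u v) ν hinv
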